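/- The digamma function satisfies ψ(z) = log z − 1/(2z) − ∫₀^∞ ([t] − t + 1/2)/(t + z)² dt for all z with Re z > 0, where [t] denotes the floor of t. -/

import Mathlib

open Complex Real

open MeasureTheory Set Filter Topology intervalIntegral

noncomputable section

/-- The sawtooth-type function appearing in the integrand. -/
def saw (t : ℝ) : ℝ := (⌊t⌋ : ℝ) - t + 1/2

lemma saw_abs_le (t : ℝ) (ht : 0 ≤ t) : |saw t| ≤ 1/2 := by
  have h1 := Int.sub_one_lt_floor t
  have h2 := Int.floor_le t
  rw [abs_le]
  constructor <;> simp only [saw] <;> linarith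

lemma measurable_saw : Measurable saw := by
  have : Measurable fun t : ℝ => (⌊t⌋ : ℝ) :=
    Measurable.comp (fun s hs => trivial) Int.measurable_floor
  exact (this.sub measurable_id).add measurable_const

/-- integrability of `(t+c)⁻²` on `(0,∞)` for `c > 0`. -/
lemma integrableOn_inv_sq_shift {c : ℝ} (hc : 0 < c) :
    IntegrableOn (fun t : ℝ => ((t + c) ^ 2)⁻¹) (Ioi 0) := by
  have hderiv : ∀ x ∈ Ici (0:ℝ), HasDerivAt (fun t : ℝ => -(t + c)⁻¹) ((x + c) ^ 2)⁻¹ x := by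
    intro x hx
    have hx0 : x + c ≠ 0 := by have : (0:ℝ) ≤ x := hx; positivity
    have : HasDerivAt (fun t : ℝ => t + c) 1 x := (hasDerivAt_id x).add_const c
    have := (this.inv hx0).neg
    simp only [one_div, neg_neg, one_mul, neg_div] at this
    exact this
  have hpos : ∀ x ∈ Ioi (0:ℝ), 0 ≤ ((x + c) ^ 2)⁻¹ := fun x _ => by positivity
  have htend : Tendsto (fun t : ℝ => -(t + c)⁻¹) atTop (𝓝 0) := by
    rw [show (0:ℝ) = -0 by norm_num]
    exact (((tendsto_atTop_add_const_right atTop c tendsto_id).inv_tendsto_atTop)).neg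
  exact integrableOn_Ioi_deriv_of_nonneg' hderiv hpos htend

/-- integrability of the complex integrand. -/
lemma integrableOn_saw_div {z : ℂ} (hz : 0 < z.re) :
    IntegrableOn (fun t : ℝ => ((saw t : ℝ) : ℂ) / ((t : ℂ) + z) ^ 2) (Ioi 0) := by
  have hmeas : AEStronglyMeasurable (fun t : ℝ => ((saw t : ℝ) : ℂ) / ((t : ℂ) + z) ^ 2)
      (volume.restrict (Ioi 0)) := by
    apply Measurable.aestronglyMeasurable
    exact ((Complex.measurable_ofReal.comp measurable_saw).div
      (((Complex.measurable_ofReal.add measurable_const).pow measurable_const)))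
  refine Integrable.mono' ((integrableOn_inv_sq_shift hz).const_mul (1/2 : ℝ)) hmeas ?_
  filter_upwards [ae_restrict_mem measurableSet_Ioi] with t ht
  have ht' : (0:ℝ) < t := ht
  have hre : 0 < t + z.re := by linarith
  have habs : t + z.re ≤ ‖(t : ℂ) + z‖ := by
    have := Complex.re_le_norm ((t : ℂ) + z)
    simpa using this
  have habs0 : (0:ℝ) < ‖(t : ℂ) + z‖ := lt_of_lt_of_le hre habs
  rw [norm_div, norm_pow, Complex.norm_real, Real.norm_eq_abs]
  have h1 : |saw t| ≤ 1/2 := saw_abs_le t ht'.le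
  have h2 : ((t + z.re) ^ 2)⁻¹ ≥ (‖(t : ℂ) + z‖ ^ 2)⁻¹ := by
    apply inv_anti₀ (by positivity)
    exact pow_le_pow_left₀ hre.le habs 2
  calc |saw t| / ‖(t : ℂ) + z‖ ^ 2
      ≤ (1/2) / ‖(t : ℂ) + z‖ ^ 2 := by
        apply div_le_div_of_nonneg_right h1 (by positivity)
    _ ≤ 1/2 * ((t + z.re) ^ 2)⁻¹ := by
        rw [div_eq_mul_inv]
        exact mul_le_mul_of_nonneg_left h2 (by norm_num)

/-- real version of integrability. -/
lemma integrableOn_saw_div_real {x : ℝ} (hx : 0 < x) :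
    IntegrableOn (fun t : ℝ => saw t / (t + x) ^ 2) (Ioi 0) := by
  have hmeas : AEStronglyMeasurable (fun t : ℝ => saw t / (t + x) ^ 2)
      (volume.restrict (Ioi 0)) := by
    apply Measurable.aestronglyMeasurable
    exact measurable_saw.div ((measurable_id.add measurable_const).pow measurable_const)
  refine Integrable.mono' ((integrableOn_inv_sq_shift hx).const_mul (1/2 : ℝ)) hmeas ?_
  filter_upwards [ae_restrict_mem measurableSet_Ioi] with t ht
  have ht' : (0:ℝ) < t := ht
  have hre : 0 < t + x := by linarith
  rw [Real.norm_eq_abs, abs_div, _root_.abs_of_nonneg (by positivity : (0:ℝ) ≤ (t+x)^2)]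
  rw [div_eq_mul_inv]
  exact mul_le_mul_of_nonneg_right (saw_abs_le t ht'.le) (by positivity)

lemma intervalIntegrable_saw {x : ℝ} (hx : 0 < x) {a b : ℝ} (ha : 0 ≤ a) (hab : a ≤ b) :
    IntervalIntegrable (fun t : ℝ => saw t / (t + x) ^ 2) volume a b := by
  rw [intervalIntegrable_iff_integrableOn_Ioc_of_le hab]
  exact (integrableOn_saw_div_real hx).mono_set fun t ht => lt_of_le_of_lt ha ht.1

/-- FTC on a unit interval. -/
lemma integral_saw_unit {x : ℝ} (hx : 0 < x) (k : ℕ) :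
    ∫ t in (k:ℝ)..((k:ℝ)+1), saw t / (t + x) ^ 2
      = (1/((k:ℝ)+x) + 1/(((k:ℝ)+1)+x))/2
        - (Real.log (((k:ℝ)+1)+x) - Real.log ((k:ℝ)+x)) := by
  have hk0 : (0:ℝ) ≤ (k:ℝ) := Nat.cast_nonneg k
  -- replace the floor by k a.e.
  have hcongr : ∫ t in (k:ℝ)..((k:ℝ)+1), saw t / (t + x) ^ 2
      = ∫ t in (k:ℝ)..((k:ℝ)+1), ((k:ℝ) - t + 1/2) / (t + x) ^ 2 := by
    apply intervalIntegral.integral_congr_ae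
    have hne : ∀ᵐ t : ℝ, t ≠ ((k:ℝ)+1) := by
      refine ae_iff.mpr ?_
      simp only [not_not, Set.setOf_eq_eq_singleton]
      exact measure_singleton _
    filter_upwards [hne] with t htne htmem
    rw [Set.uIoc_of_le (by linarith)] at htmem
    have h1 : (k:ℝ) < t := htmem.1
    have h2 : t < (k:ℝ) + 1 := lt_of_le_of_ne htmem.2 htne
    have hfl : ⌊t⌋ = (k:ℤ) := by
      rw [Int.floor_eq_iff]
      constructor
      · exact_mod_cast h1.le
      · push_cast; linarith
    simp only [saw, hfl]
    push_cast
    ring_nf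
  rw [hcongr]
  -- FTC
  set F : ℝ → ℝ := fun t => -((k:ℝ)+1/2+x)/(t+x) - Real.log (t+x) with hF
  have hderiv : ∀ t ∈ uIcc (k:ℝ) ((k:ℝ)+1),
      HasDerivAt F (((k:ℝ) - t + 1/2) / (t + x) ^ 2) t := by
    intro t ht
    rw [Set.uIcc_of_le (by linarith)] at ht
    have htx : (0:ℝ) < t + x := by have := ht.1; linarith
    have h1 : HasDerivAt (fun t : ℝ => t + x) 1 t := (hasDerivAt_id t).add_const x
    have h2 : HasDerivAt (fun t : ℝ => -((k:ℝ)+1/2+x)/(t+x))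
        (((k:ℝ)+1/2+x)/(t+x)^2) t := by
      have h := (h1.inv htx.ne').const_mul (-((k:ℝ)+1/2+x))
      have heq : (fun t : ℝ => -((k:ℝ)+1/2+x)/(t+x)) = fun t : ℝ => -((k:ℝ)+1/2+x) * (t+x)⁻¹ := by
        funext t; rw [div_eq_mul_inv]
      rw [heq]
      refine h.congr_deriv ?_
      field_simp
    have h3 : HasDerivAt (fun t : ℝ => Real.log (t+x)) (1/(t+x)) t := by
      have := Real.hasDerivAt_log htx.ne'
      have := HasDerivAt.comp t this h1
      simpa [one_div, Function.comp_def] using this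
    have := h2.sub h3
    refine this.congr_deriv ?_
    field_simp
    ring
  have hint : IntervalIntegrable (fun t : ℝ => ((k:ℝ) - t + 1/2) / (t + x) ^ 2)
      volume (k:ℝ) ((k:ℝ)+1) := by
    apply ContinuousOn.intervalIntegrable
    apply ContinuousOn.div
    · fun_prop
    · fun_prop
    · intro t ht
      rw [Set.uIcc_of_le (by linarith)] at ht
      have h1 := ht.1
      have htx : (0:ℝ) < t + x := by linarith
      exact pow_ne_zero 2 htx.ne'
  rw [intervalIntegral.integral_eq_sub_of_hasDerivAt hderiv hint]
  have h1 : (0:ℝ) < (k:ℝ) + x := by linarith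
  have h2 : (0:ℝ) < ((k:ℝ)+1) + x := by linarith
  simp only [hF]
  field_simp
  ring

/-- Euler–Maclaurin style sum formula. -/
lemma integral_saw_sum {x : ℝ} (hx : 0 < x) (N : ℕ) :
    ∫ t in (0:ℝ)..(N:ℝ), saw t / (t + x) ^ 2
      = (∑ k ∈ Finset.range N, 1/((k:ℝ)+x)) + (1/((N:ℝ)+x) - 1/x)/2
        - Real.log ((N:ℝ)+x) + Real.log x := by
  induction N with
  | zero => simp
  | succ N ih =>
    have h1 : ∫ t in (0:ℝ)..((N:ℝ)+1), saw t / (t + x) ^ 2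
        = (∫ t in (0:ℝ)..(N:ℝ), saw t / (t + x) ^ 2)
          + ∫ t in (N:ℝ)..((N:ℝ)+1), saw t / (t + x) ^ 2 := by
      rw [intervalIntegral.integral_add_adjacent_intervals
        (intervalIntegrable_saw hx le_rfl (Nat.cast_nonneg N))
        (intervalIntegrable_saw hx (Nat.cast_nonneg N) (by linarith))]
    push_cast
    rw [h1, ih, integral_saw_unit hx N, Finset.sum_range_succ]
    ring

lemma tendsto_log_add_sub_log (c : ℝ) :
    Tendsto (fun N : ℕ => Real.log ((N:ℝ) + c) - Real.log N) atTop (𝓝 0) := by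
  have h1 : Tendsto (fun N : ℕ => 1 + c * ((N:ℝ))⁻¹) atTop (𝓝 1) := by
    have := (tendsto_natCast_atTop_atTop (R := ℝ)).inv_tendsto_atTop
    have := this.const_mul c
    simpa using (tendsto_const_nhds (x := (1:ℝ))).add this
  have h2 : Tendsto (fun N : ℕ => Real.log (1 + c * ((N:ℝ))⁻¹)) atTop (𝓝 0) := by
    have := (Real.continuousAt_log (by norm_num : (1:ℝ) ≠ 0)).tendsto.comp h1
    simpa [Function.comp_def] using this
  apply h2.congr'
  have hev : ∀ᶠ N : ℕ in atTop, (1:ℝ) + |c| ≤ (N:ℝ) := by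
    have := tendsto_natCast_atTop_atTop (R := ℝ)
    exact this.eventually_ge_atTop _
  filter_upwards [hev] with N hN
  have hN0 : (0:ℝ) < (N:ℝ) := by have := abs_nonneg c; linarith
  have hNc : (0:ℝ) < (N:ℝ) + c := by have := neg_abs_le c; linarith
  rw [← Real.log_div hNc.ne' hN0.ne']
  congr 1
  field_simp

lemma tendsto_log_sub_sum {x : ℝ} (hx : 0 < x) :
    Tendsto (fun N : ℕ => Real.log N - ∑ k ∈ Finset.range N, 1/((k:ℝ)+x)) atTop
      (𝓝 (deriv (Real.log ∘ Real.Gamma) x)) := by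
  set f := Real.log ∘ Real.Gamma with hf
  have hc : ConvexOn ℝ (Ioi 0) f := Real.convexOn_log_Gamma
  have h_rec : ∀ y : ℝ, 0 < y → f (y + 1) = f y + Real.log y := fun y hy => by
    simp only [hf, Function.comp_apply, Real.Gamma_add_one hy.ne',
      Real.log_mul hy.ne' (Real.Gamma_pos_of_pos hy).ne', add_comm]
  have hder : ∀ {y : ℝ}, 0 < y → DifferentiableAt ℝ f y := by
    intro y hy
    refine ((Real.differentiableAt_Gamma ?_).log (Real.Gamma_ne_zero ?_)) <;>
      exact fun m => ne_of_gt (by have : (0:ℝ) ≤ m := Nat.cast_nonneg m; linarith)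
  have hder_rec : ∀ y : ℝ, 0 < y → deriv f (y + 1) = deriv f y + 1 / y := by
    intro y hy
    rw [← deriv_comp_add_const, one_div, ← Real.deriv_log,
      ← deriv_add (hder hy) (Real.differentiableAt_log hy.ne')]
    apply Filter.EventuallyEq.deriv_eq
    filter_upwards [eventually_gt_nhds hy] using h_rec
  have hder_sum : ∀ N : ℕ, deriv f (x + N) = deriv f x + ∑ k ∈ Finset.range N, 1/((k:ℝ)+x) := by
    intro N
    induction N with
    | zero => simp
    | succ N ih =>
      have : x + ((N:ℕ):ℝ) + 1 = x + ((N+1:ℕ):ℝ) := by push_cast; ring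
      rw [← this, hder_rec (x + N) (by positivity), ih, Finset.sum_range_succ]
      push_cast
      ring
  -- bounds from convexity
  have upper : ∀ N : ℕ, deriv f (x + N) ≤ Real.log (x + N) := by
    intro N
    have hxN : (0:ℝ) < x + N := by positivity
    have := hc.deriv_le_slope (mem_Ioi.mpr hxN) (mem_Ioi.mpr (by linarith : (0:ℝ) < x + N + 1))
      (by linarith) (hder hxN)
    rw [slope_def_field, show x + (N:ℝ) + 1 - (x + N) = 1 by ring, div_one,
      h_rec (x + N) hxN, add_sub_cancel_left] at this
    exact this
  have lower' : ∀ y : ℝ, 0 < y → Real.log y ≤ deriv f (y + 1) := by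
    intro y hy
    have := hc.slope_le_deriv (mem_Ioi.mpr hy) (mem_Ioi.mpr (by linarith : (0:ℝ) < y + 1))
      (by linarith) (hder (by linarith))
    rw [slope_def_field, show y + 1 - y = 1 by ring, div_one, h_rec y hy,
      add_sub_cancel_left] at this
    exact this
  have lower : ∀ N : ℕ, 1 ≤ N → Real.log (x + N - 1) ≤ deriv f (x + N) := by
    intro N hN
    have h1 : (1:ℝ) ≤ (N:ℝ) := by exact_mod_cast hN
    have hxN : (0:ℝ) < x + N - 1 := by linarith
    have := lower' (x + N - 1) hxN
    rwa [sub_add_cancel] at this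
  -- squeeze
  have hlow : Tendsto (fun N : ℕ => deriv f x + (Real.log N - Real.log (x + N))) atTop
      (𝓝 (deriv f x)) := by
    have := (tendsto_log_add_sub_log x).neg
    have h := (tendsto_const_nhds (x := deriv f x)).add this
    simp only [neg_zero, add_zero] at h
    apply h.congr
    intro N
    rw [show (N:ℝ) + x = x + N by ring]
    ring
  have hhigh : Tendsto (fun N : ℕ => deriv f x + (Real.log N - Real.log (x + N - 1))) atTop
      (𝓝 (deriv f x)) := by
    have := (tendsto_log_add_sub_log (x - 1)).neg
    have h := (tendsto_const_nhds (x := deriv f x)).add this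
    simp only [neg_zero, add_zero] at h
    apply h.congr
    intro N
    rw [show (N:ℝ) + (x - 1) = x + N - 1 by ring]
    ring
  refine tendsto_of_tendsto_of_tendsto_of_le_of_le' hlow hhigh ?_ ?_
  · filter_upwards [eventually_ge_atTop 1] with N hN
    have := upper N
    have hs := hder_sum N
    have : deriv f x + ∑ k ∈ Finset.range N, 1/((k:ℝ)+x) ≤ Real.log (x + N) := hs ▸ this
    linarith
  · filter_upwards [eventually_ge_atTop 1] with N hN
    have := lower N hN
    have hs := hder_sum N
    have : Real.log (x + N - 1) ≤ deriv f x + ∑ k ∈ Finset.range N, 1/((k:ℝ)+x) := hs ▸ this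
    linarith

/-- The real-variable version of the main theorem. -/
lemma real_digamma_formula {x : ℝ} (hx : 0 < x) :
    deriv Real.Gamma x / Real.Gamma x
      = Real.log x - 1/(2*x) - ∫ t in Ioi (0:ℝ), saw t / (t + x) ^ 2 := by
  set I : ℝ := ∫ t in Ioi (0:ℝ), saw t / (t + x) ^ 2 with hI
  -- limit of the interval integrals
  have hIlim : Tendsto (fun N : ℕ => ∫ t in (0:ℝ)..(N:ℝ), saw t / (t + x) ^ 2) atTop (𝓝 I) :=
    intervalIntegral_tendsto_integral_Ioi 0 (integrableOn_saw_div_real hx)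
      tendsto_natCast_atTop_atTop
  -- second expression of the limit
  have key : Tendsto (fun N : ℕ => Real.log N - ∑ k ∈ Finset.range N, 1/((k:ℝ)+x)) atTop
      (𝓝 (Real.log x - 1/(2*x) - I)) := by
    have h1 : Tendsto (fun N : ℕ => 1/((N:ℝ)+x)/2) atTop (𝓝 0) := by
      have : Tendsto (fun N : ℕ => (N:ℝ) + x) atTop atTop :=
        tendsto_atTop_add_const_right _ _ tendsto_natCast_atTop_atTop
      have := this.inv_tendsto_atTop
      have := this.div_const 2
      simpa [one_div] using this
    have h2 := (tendsto_log_add_sub_log x).neg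
    have comb := ((h2.add h1).sub hIlim).add
      (tendsto_const_nhds (x := Real.log x - 1/(2*x)))
    simp only [neg_zero, add_zero, zero_sub, zero_add] at comb
    have comb' : Tendsto (fun N : ℕ =>
        (-(Real.log ((N:ℝ) + x) - Real.log N) + 1/((N:ℝ)+x)/2
          - ∫ t in (0:ℝ)..(N:ℝ), saw t / (t + x) ^ 2) + (Real.log x - 1/(2*x))) atTop
        (𝓝 (Real.log x - 1/(2*x) - I)) := by
      convert comb using 2
      ring
    apply comb'.congr
    intro N
    have := integral_saw_sum hx N
    have hxN : (0:ℝ) < (N:ℝ) + x := by positivity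
    rw [this]
    ring
  have := tendsto_nhds_unique (tendsto_log_sub_sum hx) key
  rw [← this, Function.comp_def,
    deriv.log (Real.differentiableAt_Gamma
      (fun m => ne_of_gt (by have : (0:ℝ) ≤ m := Nat.cast_nonneg m; linarith)))
    (Real.Gamma_pos_of_pos hx).ne']

lemma complex_ne_neg_nat {z : ℂ} (hz : 0 < z.re) : ∀ m : ℕ, z ≠ -(m:ℂ) := by
  intro m h
  have : z.re = (-(m:ℂ)).re := by rw [h]
  simp only [Complex.neg_re, Complex.natCast_re] at this
  have : (0:ℝ) ≤ (m:ℝ) := Nat.cast_nonneg m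
  linarith [hz.trans_eq ‹z.re = _›]

lemma deriv_complex_Gamma_ofReal {x : ℝ} (hx : 0 < x) :
    deriv Complex.Gamma (x:ℂ) = ((deriv Real.Gamma x : ℝ) : ℂ) := by
  have hre : (0:ℝ) < ((x:ℂ)).re := by simpa using hx
  have h1 : HasDerivAt Complex.Gamma (deriv Complex.Gamma (x:ℂ)) (x:ℂ) :=
    (Complex.differentiableAt_Gamma _ (complex_ne_neg_nat hre)).hasDerivAt
  have h2 := h1.comp_ofReal
  have h3 : HasDerivAt (fun y : ℝ => ((Real.Gamma y : ℝ) : ℂ)) ((deriv Real.Gamma x : ℝ) : ℂ) x :=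
    ((Real.differentiableAt_Gamma
      (fun m => ne_of_gt (by have : (0:ℝ) ≤ m := Nat.cast_nonneg m; linarith))).hasDerivAt).ofReal_comp
  have h4 : (fun y : ℝ => Complex.Gamma ((y:ℝ):ℂ)) = fun y : ℝ => ((Real.Gamma y : ℝ) : ℂ) :=
    funext fun y => Complex.Gamma_ofReal y
  rw [h4] at h2
  exact h2.unique h3

set_option maxHeartbeats 1000000 in
/-- the parametric integral is complex-differentiable. -/
lemma hasDerivAt_sawIntegral {z₀ : ℂ} (hz : 0 < z₀.re) :
    HasDerivAt (fun z : ℂ => ∫ t in Ioi (0:ℝ), ((saw t : ℝ) : ℂ) / ((t:ℂ) + z) ^ 2)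
      (∫ t in Ioi (0:ℝ), (-2) * ((saw t : ℝ) : ℂ) / ((t:ℂ) + z₀) ^ 3) z₀ := by
  set ε : ℝ := z₀.re / 2 with hε
  have hε_pos : 0 < ε := by positivity
  have hmeas : ∀ z : ℂ, AEStronglyMeasurable (fun t : ℝ => ((saw t : ℝ):ℂ) / ((t:ℂ) + z) ^ 2)
      (volume.restrict (Ioi 0)) := fun z => Measurable.aestronglyMeasurable <|
    (Complex.measurable_ofReal.comp measurable_saw).div
      (((Complex.measurable_ofReal.add measurable_const).pow measurable_const))
  have hbound : ∀ᵐ t ∂(volume.restrict (Ioi (0:ℝ))), ∀ z ∈ Metric.ball z₀ ε,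
      ‖(-2) * ((saw t : ℝ):ℂ) / ((t:ℂ) + z) ^ 3‖ ≤ ε⁻¹ * (((t + ε) ^ 2)⁻¹) := by
    filter_upwards [ae_restrict_mem measurableSet_Ioi] with t ht z hzball
    have ht' : (0:ℝ) < t := ht
    have hzre : ε < z.re := by
      have h1 : |(z - z₀).re| ≤ ‖z - z₀‖ := Complex.abs_re_le_norm _
      have h2 : ‖z - z₀‖ < ε := by
        rw [Metric.mem_ball, Complex.dist_eq] at hzball; exact hzball
      have h3 : |(z - z₀).re| < ε := lt_of_le_of_lt h1 h2
      rw [abs_lt] at h3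
      have := h3.1
      simp only [Complex.sub_re] at this
      simp only [hε] at this ⊢
      linarith
    have habs : t + ε ≤ ‖(t:ℂ) + z‖ := by
      have h1 : ((t:ℂ) + z).re ≤ ‖(t:ℂ) + z‖ := Complex.re_le_norm _
      have h2 : ((t:ℂ) + z).re = t + z.re := by simp
      linarith
    have htε : (0:ℝ) < t + ε := by linarith
    rw [norm_div, norm_mul, norm_pow, Complex.norm_real, Real.norm_eq_abs]
    have h1 : ‖(-2 : ℂ)‖ = 2 := by simp
    rw [h1]
    have hsaw : |saw t| ≤ 1/2 := saw_abs_le t ht'.le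
    have habs3 : (t + ε) ^ 3 ≤ ‖(t:ℂ) + z‖ ^ 3 := pow_le_pow_left₀ htε.le habs 3
    calc 2 * |saw t| / ‖(t:ℂ) + z‖ ^ 3
        ≤ 1 / (t + ε) ^ 3 := by
          rw [div_le_div_iff₀ (pow_pos (htε.trans_le habs) 3) (by positivity)]
          calc 2 * |saw t| * (t + ε) ^ 3 ≤ 2 * (1/2) * (t+ε)^3 := by
                have := mul_le_mul_of_nonneg_right
                  (mul_le_mul_of_nonneg_left hsaw (by norm_num : (0:ℝ) ≤ 2))
                  (by positivity : (0:ℝ) ≤ (t+ε)^3)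
                linarith
            _ = (t + ε)^3 := by ring
            _ ≤ ‖(t:ℂ) + z‖ ^ 3 := habs3
            _ = 1 * ‖(t:ℂ) + z‖ ^ 3 := by ring
      _ ≤ ε⁻¹ * ((t + ε) ^ 2)⁻¹ := by
          rw [one_div, pow_succ' (t+ε) 2, mul_inv]
          exact mul_le_mul_of_nonneg_right (inv_anti₀ hε_pos (by linarith))
            (by positivity)
  have hdiff : ∀ᵐ t ∂(volume.restrict (Ioi (0:ℝ))), ∀ z ∈ Metric.ball z₀ ε,
      HasDerivAt (fun z : ℂ => ((saw t : ℝ):ℂ) / ((t:ℂ) + z) ^ 2)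
        ((-2) * ((saw t : ℝ):ℂ) / ((t:ℂ) + z) ^ 3) z := by
    filter_upwards [ae_restrict_mem measurableSet_Ioi] with t ht z hzball
    have ht' : (0:ℝ) < t := ht
    have hzre : ε < z.re := by
      have h1 : |(z - z₀).re| ≤ ‖z - z₀‖ := Complex.abs_re_le_norm _
      have h2 : ‖z - z₀‖ < ε := by
        rw [Metric.mem_ball, Complex.dist_eq] at hzball; exact hzball
      have h3 : |(z - z₀).re| < ε := lt_of_le_of_lt h1 h2
      rw [abs_lt] at h3
      have := h3.1
      simp only [Complex.sub_re] at this
      simp only [hε] at this ⊢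
      linarith
    have hne : ((t:ℂ) + z) ≠ 0 := by
      intro h
      have : ((t:ℂ) + z).re = 0 := by rw [h]; simp
      simp only [Complex.add_re, Complex.ofReal_re] at this
      linarith
    have h1 : HasDerivAt (fun z : ℂ => (t:ℂ) + z) 1 z := (hasDerivAt_id z).const_add _
    have h2 : HasDerivAt (fun z : ℂ => ((t:ℂ) + z) ^ 2) (2 * ((t:ℂ) + z)) z := by
      have := h1.pow 2
      refine this.congr_deriv ?_
      norm_num
    have h3 := (h2.inv (pow_ne_zero 2 hne)).const_mul ((saw t : ℝ) : ℂ)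
    have heq : (fun z : ℂ => ((saw t : ℝ):ℂ) / ((t:ℂ) + z) ^ 2)
        = fun z : ℂ => ((saw t : ℝ):ℂ) * (((t:ℂ) + z) ^ 2)⁻¹ := by
      funext w; rw [div_eq_mul_inv]
    rw [heq]
    refine h3.congr_deriv ?_
    rw [div_eq_mul_inv]
    field_simp
  have key := _root_.hasDerivAt_integral_of_dominated_loc_of_deriv_le
    (μ := volume.restrict (Ioi 0))
    (F := fun z (t : ℝ) => ((saw t : ℝ):ℂ) / ((t:ℂ) + z) ^ 2)
    (F' := fun z (t : ℝ) => (-2) * ((saw t : ℝ):ℂ) / ((t:ℂ) + z) ^ 3)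
    (x₀ := z₀) (bound := fun t => ε⁻¹ * (((t + ε) ^ 2)⁻¹)) (Metric.ball_mem_nhds z₀ hε_pos)
    (Filter.Eventually.of_forall fun z => hmeas z) (integrableOn_saw_div hz)
    (Measurable.aestronglyMeasurable <| (measurable_const.mul
      (Complex.measurable_ofReal.comp measurable_saw)).div
      (((Complex.measurable_ofReal.add measurable_const).pow measurable_const)))
    hbound ((integrableOn_inv_sq_shift hε_pos).const_mul _) hdiff
  exact key.2

lemma complex_eq_at_real {x : ℝ} (hx : 0 < x) :
    deriv Complex.Gamma (x:ℂ) / Complex.Gamma (x:ℂ)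
      = Complex.log (x:ℂ) - 1/(2*(x:ℂ))
        - ∫ t in Ioi (0:ℝ), ((saw t : ℝ):ℂ)/((t:ℂ)+(x:ℂ))^2 := by
  have hint : (∫ t in Ioi (0:ℝ), ((saw t : ℝ):ℂ)/((t:ℂ)+(x:ℂ))^2)
      = (((∫ t in Ioi (0:ℝ), saw t/(t+x)^2) : ℝ) : ℂ) := by
    rw [show (fun t : ℝ => ((saw t : ℝ):ℂ)/((t:ℂ)+(x:ℂ))^2)
        = fun t : ℝ => ((saw t/(t+x)^2 : ℝ) : ℂ) from funext fun t => by push_cast; ring]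
    exact _root_.integral_ofReal
  rw [hint, deriv_complex_Gamma_ofReal hx, Complex.Gamma_ofReal,
    show (((deriv Real.Gamma x : ℝ)):ℂ)/(((Real.Gamma x : ℝ)):ℂ)
      = (((deriv Real.Gamma x / Real.Gamma x) : ℝ) : ℂ) by push_cast; ring,
    real_digamma_formula hx, ← Complex.ofReal_log hx.le]
  push_cast
  ring

end

noncomputable def digamma (z : ℂ) : ℂ := deriv Complex.Gamma z / Complex.Gamma z

theorem digamma_integral_formula (z : ℂ) (hz : 0 < z.re) :
    _root_.digamma z = Complex.log z - 1 / (2 * z) -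
      ∫ t in Set.Ioi (0 : ℝ),
        ((((⌊t⌋ : ℝ) - t + 1/2 : ℝ) : ℂ) / ((t : ℂ) + z) ^ 2) := by
  have hU_open : IsOpen {w : ℂ | 0 < w.re} := isOpen_lt continuous_const Complex.continuous_re
  have hU_conn : IsPreconnected {w : ℂ | 0 < w.re} := (convex_halfSpace_re_gt 0).isPreconnected
  set g : ℂ → ℂ := fun w => Complex.log w - 1/(2*w)
    - ∫ t in Ioi (0:ℝ), ((saw t : ℝ):ℂ)/((t:ℂ)+w)^2 with hg_def
  have hGamma : AnalyticOnNhd ℂ Complex.Gamma {w : ℂ | 0 < w.re} := by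
    apply DifferentiableOn.analyticOnNhd _ hU_open
    exact fun w hw =>
      (Complex.differentiableAt_Gamma _ (complex_ne_neg_nat hw)).differentiableWithinAt
  have hf : AnalyticOnNhd ℂ _root_.digamma {w : ℂ | 0 < w.re} := by
    intro w hw
    have h1 : AnalyticAt ℂ (deriv Complex.Gamma) w := hGamma.deriv w hw
    have h2 : AnalyticAt ℂ Complex.Gamma w := hGamma w hw
    exact h1.div h2 (Complex.Gamma_ne_zero_of_re_pos hw)
  have hg : AnalyticOnNhd ℂ g {w : ℂ | 0 < w.re} := by
    intro w hw
    have hw' : 0 < w.re := hw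
    have hw0 : w ≠ 0 := fun h => by simp [h] at hw'
    have h1 : AnalyticAt ℂ Complex.log w :=
      analyticAt_clog (Complex.mem_slitPlane_iff.mpr (Or.inl hw'))
    have h2 : AnalyticAt ℂ (fun w : ℂ => 1/(2*w)) w := by
      refine AnalyticAt.div analyticAt_const (analyticAt_const.mul analyticAt_id) ?_
      simp only [ne_eq, mul_eq_zero, OfNat.ofNat_ne_zero, false_or]
      exact hw0
    have h3 : AnalyticAt ℂ (fun w : ℂ => ∫ t in Ioi (0:ℝ), ((saw t : ℝ):ℂ)/((t:ℂ)+w)^2) w := by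
      have hd : DifferentiableOn ℂ (fun w : ℂ => ∫ t in Ioi (0:ℝ), ((saw t : ℝ):ℂ)/((t:ℂ)+w)^2)
          {w : ℂ | 0 < w.re} := fun u hu =>
        (hasDerivAt_sawIntegral hu).differentiableAt.differentiableWithinAt
      exact hd.analyticOnNhd hU_open w hw
    exact (h1.sub h2).sub h3
  have hfreq : ∃ᶠ w in 𝓝[≠] (1:ℂ), _root_.digamma w = g w := by
    have h1 : Tendsto (fun n : ℕ => (1 + 1/((n:ℝ)+1))) atTop (𝓝 1) := by
      have := tendsto_one_div_add_atTop_nhds_zero_nat (𝕜 := ℝ)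
      simpa using (tendsto_const_nhds (x := (1:ℝ))).add this
    have h2 : Tendsto (fun n : ℕ => (((1 + 1/((n:ℝ)+1)) : ℝ) : ℂ)) atTop (𝓝 1) := by
      have := (Complex.continuous_ofReal.tendsto 1).comp h1
      exact this
    have h3 : Tendsto (fun n : ℕ => (((1 + 1/((n:ℝ)+1)) : ℝ) : ℂ)) atTop (𝓝[≠] 1) := by
      apply tendsto_nhdsWithin_of_tendsto_nhds_of_eventually_within _ h2
      filter_upwards with n
      simp only [mem_compl_iff, mem_singleton_iff]
      intro h
      rw [show (1:ℂ) = ((1:ℝ):ℂ) by norm_num, Complex.ofReal_inj] at h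
      have : 1/((n:ℝ)+1) > 0 := by positivity
      linarith
    refine h3.frequently (Filter.Frequently.of_forall fun n => ?_)
    have hpos : (0:ℝ) < 1 + 1/((n:ℝ)+1) := by positivity
    simpa [_root_.digamma, hg_def] using complex_eq_at_real hpos
  have heq := hf.eqOn_of_preconnected_of_frequently_eq hg hU_conn
    (show (1:ℂ) ∈ {w : ℂ | 0 < w.re} by norm_num) hfreq
  have hz' : z ∈ {w : ℂ | 0 < w.re} := hz
  have := heq hz'
  rw [this]
  simp only [hg_def, saw]
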